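/- For complex D×N matrices B and Ψ and any d ∈ {1,...,D}, the tail sum of squared singular values satisfies √(Σ_{j>d} σ_j(B+Ψ)²) ≤ √2 · √(Σ_{j>d} σ_j(B)²) + √2 · ‖Ψ‖_F, i.e., ‖(B+Ψ)_d − (B+Ψ)‖_F ≤ √2 ‖(B)_d − B‖_F + √2 ‖Ψ‖_F. -/

import Mathlib

open Matrix

/-- Frobenius norm of a complex matrix. -/
noncomputable def frob {m n : Type*} [Fintype m] [Fintype n] (M : Matrix m n ℂ) : ℝ :=
  Real.sqrt (∑ i, ∑ j, ‖M i j‖ ^ 2)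

/-- `B` is a best rank-`d` approximation of `A` in Frobenius norm. -/
def IsBestRankApprox {m n : Type*} [Fintype m] [Fintype n] (d : ℕ)
    (A B : Matrix m n ℂ) : Prop :=
  B.rank ≤ d ∧ ∀ C : Matrix m n ℂ, C.rank ≤ d → frob (B - A) ≤ frob (C - A)

/-- The singular values of `M` : nonnegative square roots of the eigenvalues of `M * Mᴴ`
(unsorted enumeration). -/
noncomputable def singVals {D : ℕ} {n : Type*} [Fintype n] (M : Matrix (Fin D) n ℂ) :
    Fin D → ℝ :=
  fun i => Real.sqrt ((Matrix.isHermitian_mul_conjTranspose_self M).eigenvalues i)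

/-- `C` is a scaled left-singular-vector form of `M`, i.e. `C = U Σ = M V` for some
SVD `M = U Σ Vᴴ` of `M`: equivalently `C = M V` with `V` unitary and `Cᴴ C` diagonal with
nonnegative real entries. -/
def IsScaledLeftSV {D : ℕ} {n : Type*} [Fintype n] [DecidableEq n]
    (M C : Matrix (Fin D) n ℂ) : Prop :=
  ∃ V ∈ Matrix.unitaryGroup n ℂ, C = M * V ∧
    ∃ t : n → ℝ, (∀ j, 0 ≤ t j) ∧ Cᴴ * C = Matrix.diagonal (fun j => (t j : ℂ))

namespace Stmt7Aux

variable {m n : Type*} [Fintype m] [Fintype n]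

noncomputable def frobSq (M : Matrix m n ℂ) : ℝ := ∑ i, ∑ j, ‖M i j‖ ^ 2

lemma frobSq_nonneg (M : Matrix m n ℂ) : 0 ≤ frobSq M := by
  unfold frobSq; positivity

lemma frob_eq (M : Matrix m n ℂ) : frob M = Real.sqrt (frobSq M) := rfl

lemma frob_nonneg (M : Matrix m n ℂ) : 0 ≤ frob M := Real.sqrt_nonneg _

lemma frob_neg (M : Matrix m n ℂ) : frob (-M) = frob M := by
  simp [frob]

lemma frob_eq_norm (M : Matrix m n ℂ) :
    frob M = ‖(WithLp.equiv 2 (m × n → ℂ)).symm (fun p => M p.1 p.2)‖ := by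
  rw [EuclideanSpace.norm_eq]
  simp [frob, Fintype.sum_prod_type]

lemma frob_add_le (X Y : Matrix m n ℂ) : frob (X + Y) ≤ frob X + frob Y := by
  rw [frob_eq_norm, frob_eq_norm, frob_eq_norm]
  have h : (WithLp.equiv 2 (m × n → ℂ)).symm (fun p => (X + Y) p.1 p.2)
      = (WithLp.equiv 2 (m × n → ℂ)).symm (fun p => X p.1 p.2)
        + (WithLp.equiv 2 (m × n → ℂ)).symm (fun p => Y p.1 p.2) := rfl
  rw [h]; exact norm_add_le _ _

lemma retrace (M : Matrix m n ℂ) : (Matrix.trace (M * Mᴴ)).re = frobSq M := by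
  simp only [Matrix.trace, Matrix.mul_apply, Matrix.conjTranspose_apply, Matrix.diag_apply,
    Complex.star_def, Complex.mul_conj, Complex.re_sum]
  simp [frobSq, Complex.sq_norm]

lemma frobSq_proj_mul {D : Type*} [Fintype D] (Q : Matrix D D ℂ) (hQh : Qᴴ = Q)
    (hQ2 : Q * Q = Q) (M : Matrix D n ℂ) :
    frobSq (Q * M) = (Matrix.trace (Q * (M * Mᴴ))).re := by
  rw [← retrace]
  congr 1
  rw [conjTranspose_mul, hQh]
  calc Matrix.trace (Q * M * (Mᴴ * Q)) = Matrix.trace ((Q * (M * Mᴴ)) * Q) := by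
        simp only [Matrix.mul_assoc]
    _ = Matrix.trace (Q * (Q * (M * Mᴴ))) := Matrix.trace_mul_comm _ _
    _ = Matrix.trace (Q * (M * Mᴴ)) := by rw [← Matrix.mul_assoc, hQ2]

lemma re_diag_nonneg {D : Type*} [Fintype D] (V : Matrix D n ℂ) (j : n) :
    0 ≤ ((Vᴴ * V) j j).re := by
  simp only [Matrix.mul_apply, Matrix.conjTranspose_apply, Complex.re_sum]
  refine Finset.sum_nonneg fun k _ => ?_
  rw [mul_comm, Complex.star_def, Complex.mul_conj]
  simpa using Complex.normSq_nonneg _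

lemma card_filter_lt (D d : ℕ) (h : d ≤ D) :
    (Finset.univ.filter fun i : Fin D => (i : ℕ) < d).card = d := by
  rw [Finset.card_filter, Fin.sum_univ_eq_sum_range (fun i => if i < d then 1 else 0),
    ← Finset.card_filter]
  have h2 : (Finset.range D).filter (· < d) = Finset.range d := by
    ext x; simp; omega
  rw [h2, Finset.card_range]

lemma sorted_dot_le {D d : ℕ} (hdD : d ≤ D) (μ c : Fin D → ℝ) (hμ : Antitone μ)
    (hμ0 : ∀ i, 0 ≤ μ i) (hc0 : ∀ i, 0 ≤ c i) (hc1 : ∀ i, c i ≤ 1)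
    (hcs : ∑ i, c i ≤ d) :
    ∑ i, μ i * c i ≤ ∑ i ∈ Finset.univ.filter (fun i : Fin D => (i : ℕ) < d), μ i := by
  rcases eq_or_lt_of_le hdD with heq | hlt
  · have h : Finset.univ.filter (fun i : Fin D => (i : ℕ) < d) = Finset.univ :=
      Finset.filter_true_of_mem fun i _ => heq ▸ i.isLt
    rw [h]
    exact Finset.sum_le_sum fun i _ => mul_le_of_le_one_right (hμ0 i) (hc1 i)
  · set k : Fin D := ⟨d, hlt⟩ with hk
    have hcard := card_filter_lt D d hdD
    have hsplit := Finset.sum_filter_add_sum_filter_not Finset.univ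
      (fun i : Fin D => (i : ℕ) < d) (fun i => μ i * c i)
    have hsplitc := Finset.sum_filter_add_sum_filter_not Finset.univ
      (fun i : Fin D => (i : ℕ) < d) c
    set Hd := Finset.univ.filter (fun i : Fin D => (i : ℕ) < d) with hHd
    set Td := Finset.univ.filter (fun i : Fin D => ¬ (i : ℕ) < d) with hTd
    have h1 : ∑ i ∈ Td, μ i * c i ≤ μ k * ∑ i ∈ Td, c i := by
      rw [Finset.mul_sum]
      refine Finset.sum_le_sum fun i hi => ?_
      have hki : k ≤ i := by
        rw [hTd] at hi
        simp only [Finset.mem_filter, Finset.mem_univ, true_and, not_lt] at hi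
        exact Fin.le_def.mpr hi
      exact mul_le_mul_of_nonneg_right (hμ hki) (hc0 i)
    have h2 : ∑ i ∈ Td, c i ≤ (d : ℝ) - ∑ i ∈ Hd, c i := by linarith
    have h3 : μ k * ∑ i ∈ Td, c i ≤ μ k * ((d : ℝ) - ∑ i ∈ Hd, c i) :=
      mul_le_mul_of_nonneg_left h2 (hμ0 k)
    have h4 : μ k * ((d : ℝ) - ∑ i ∈ Hd, c i) = ∑ i ∈ Hd, μ k * (1 - c i) := by
      rw [← Finset.mul_sum]
      congr 1
      rw [Finset.sum_sub_distrib, Finset.sum_const, hcard]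
      simp
    have h5 : ∑ i ∈ Hd, (μ i * c i + μ k * (1 - c i)) ≤ ∑ i ∈ Hd, μ i := by
      refine Finset.sum_le_sum fun i hi => ?_
      have hik : i ≤ k := by
        rw [hHd] at hi
        simp only [Finset.mem_filter, Finset.mem_univ, true_and] at hi
        exact Fin.le_def.mpr (Nat.le_of_lt hi)
      have hki := hμ hik
      have := hc1 i
      have := hc0 i
      have := hμ0 k
      nlinarith
    have h6 := Finset.sum_add_distrib (s := Hd) (f := fun i => μ i * c i)
      (g := fun i => μ k * (1 - c i))
    linarith

lemma retrace_mul_diag {D : ℕ} (Q U : Matrix (Fin D) (Fin D) ℂ) (lam : Fin D → ℝ) :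
    (Matrix.trace (Q * (U * Matrix.diagonal (fun j => (lam j : ℂ)) * Uᴴ))).re
      = ∑ j, lam j * ((Uᴴ * Q * U) j j).re := by
  have h1 : Q * (U * Matrix.diagonal (fun j => (lam j : ℂ)) * Uᴴ)
      = (Q * U * Matrix.diagonal (fun j => (lam j : ℂ))) * Uᴴ := by
    simp only [Matrix.mul_assoc]
  rw [h1, Matrix.trace_mul_comm]
  have h2 : Uᴴ * (Q * U * Matrix.diagonal (fun j => (lam j : ℂ)))
      = (Uᴴ * Q * U) * Matrix.diagonal (fun j => (lam j : ℂ)) := by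
    simp only [Matrix.mul_assoc]
  rw [h2]
  simp only [Matrix.trace, Matrix.diag_apply, Matrix.mul_diagonal, Complex.re_sum]
  exact Finset.sum_congr rfl fun j _ => by simp [mul_comm]

lemma spec' {D N : ℕ} (M : Matrix (Fin D) (Fin N) ℂ) :
    M * Mᴴ = ((Matrix.isHermitian_mul_conjTranspose_self M).eigenvectorUnitary :
        Matrix (Fin D) (Fin D) ℂ)
      * Matrix.diagonal
          (fun j => (((Matrix.isHermitian_mul_conjTranspose_self M).eigenvalues j : ℝ) : ℂ))
      * ((Matrix.isHermitian_mul_conjTranspose_self M).eigenvectorUnitary :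
          Matrix (Fin D) (Fin D) ℂ)ᴴ := by
  have h := (Matrix.isHermitian_mul_conjTranspose_self M).spectral_theorem
  rw [Unitary.conjStarAlgAut_apply, Matrix.star_eq_conjTranspose] at h
  exact h

end Stmt7Aux

open Stmt7Aux in
/-- Tail sums of squared singular values of `B + Ψ` are controlled by those of `B` plus the
Frobenius norm of `Ψ`: `√(Σ_{j>d} σ_j(B+Ψ)²) ≤ √2 √(Σ_{j>d} σ_j(B)²) + √2 ‖Ψ‖_F`;
equivalently `‖(B+Ψ)_d − (B+Ψ)‖_F ≤ √2 ‖(B)_d − B‖_F + √2 ‖Ψ‖_F`. -/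
theorem stmt7 {D N : ℕ} (d : ℕ) (hd1 : 1 ≤ d) (hdD : d ≤ D)
    (B Ψ : Matrix (Fin D) (Fin N) ℂ)
    (σB σS : Fin D → ℝ) (hσB : Antitone σB) (hσS : Antitone σS)
    (hB : ∃ e : Equiv.Perm (Fin D), σB = singVals B ∘ e)
    (hS : ∃ e : Equiv.Perm (Fin D), σS = singVals (B + Ψ) ∘ e) :
    (Real.sqrt (∑ i ∈ Finset.univ.filter (fun i : Fin D => d ≤ (i : ℕ)), σS i ^ 2) ≤
      Real.sqrt 2 * Real.sqrt (∑ i ∈ Finset.univ.filter (fun i : Fin D => d ≤ (i : ℕ)), σB i ^ 2)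
        + Real.sqrt 2 * frob Ψ) ∧
    ∀ Sd : Matrix (Fin D) (Fin N) ℂ, IsBestRankApprox d (B + Ψ) Sd →
    ∀ Bd : Matrix (Fin D) (Fin N) ℂ, IsBestRankApprox d B Bd →
      frob (Sd - (B + Ψ)) ≤ Real.sqrt 2 * frob (Bd - B) + Real.sqrt 2 * frob Ψ := by
  have sqrt2_ge : (1 : ℝ) ≤ Real.sqrt 2 := by
    rw [show (1 : ℝ) = Real.sqrt 1 by simp]
    exact Real.sqrt_le_sqrt one_le_two
  constructor
  · -- Part 1
    obtain ⟨eB, hB⟩ := hB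
    obtain ⟨eS, hS⟩ := hS
    set A := B + Ψ with hAdef
    have hHB := Matrix.isHermitian_mul_conjTranspose_self B
    have hHA := Matrix.isHermitian_mul_conjTranspose_self A
    set lB : Fin D → ℝ := hHB.eigenvalues with hlB
    set lA : Fin D → ℝ := hHA.eigenvalues with hlA
    set UB : Matrix (Fin D) (Fin D) ℂ := (hHB.eigenvectorUnitary : Matrix (Fin D) (Fin D) ℂ)
      with hUBdef
    set UA : Matrix (Fin D) (Fin D) ℂ := (hHA.eigenvectorUnitary : Matrix (Fin D) (Fin D) ℂ)
      with hUAdef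
    -- basic facts about σB, σS
    have hσB_sq : ∀ i, σB i ^ 2 = lB (eB i) := by
      intro i
      rw [hB]
      exact Real.sq_sqrt (Matrix.eigenvalues_self_mul_conjTranspose_nonneg B (eB i))
    have hσS_sq : ∀ i, σS i ^ 2 = lA (eS i) := by
      intro i
      rw [hS]
      exact Real.sq_sqrt (Matrix.eigenvalues_self_mul_conjTranspose_nonneg A (eS i))
    have hσS0 : ∀ i, 0 ≤ σS i := by
      intro i; rw [hS]; exact Real.sqrt_nonneg _
    -- unitarity
    have hUB1 : UBᴴ * UB = 1 := by
      rw [hUBdef, ← Matrix.star_eq_conjTranspose]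
      exact Matrix.mem_unitaryGroup_iff'.mp hHB.eigenvectorUnitary.2
    have hUB2 : UB * UBᴴ = 1 := by
      rw [hUBdef, ← Matrix.star_eq_conjTranspose]
      exact Matrix.mem_unitaryGroup_iff.mp hHB.eigenvectorUnitary.2
    have hUA1 : UAᴴ * UA = 1 := by
      rw [hUAdef, ← Matrix.star_eq_conjTranspose]
      exact Matrix.mem_unitaryGroup_iff'.mp hHA.eigenvectorUnitary.2
    have hUA2 : UA * UAᴴ = 1 := by
      rw [hUAdef, ← Matrix.star_eq_conjTranspose]
      exact Matrix.mem_unitaryGroup_iff.mp hHA.eigenvectorUnitary.2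
    -- spectral decompositions
    have hspecB : B * Bᴴ = UB * Matrix.diagonal (fun j => (lB j : ℂ)) * UBᴴ := spec' B
    have hspecA : A * Aᴴ = UA * Matrix.diagonal (fun j => (lA j : ℂ)) * UAᴴ := spec' A
    -- the projection Q
    set ε : Fin D → ℂ := fun j => if ((eB.symm j : Fin D) : ℕ) < d then 1 else 0 with hε
    set E : Matrix (Fin D) (Fin D) ℂ := Matrix.diagonal ε with hE
    set Q : Matrix (Fin D) (Fin D) ℂ := UB * E * UBᴴ with hQ
    set R : Matrix (Fin D) (Fin D) ℂ := 1 - Q with hRdef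
    have hEh : Eᴴ = E := by
      rw [hE, Matrix.diagonal_conjTranspose]
      have hst : star ε = ε := by
        funext j
        by_cases h : ((eB.symm j : Fin D) : ℕ) < d <;> simp [hε, h]
      rw [hst]
    have hE2 : E * E = E := by
      rw [hE, Matrix.diagonal_mul_diagonal]
      have hm : (fun j => ε j * ε j) = ε := by
        funext j
        by_cases h : ((eB.symm j : Fin D) : ℕ) < d <;> simp [hε, h]
      rw [hm]
    have hQh : Qᴴ = Q := by
      rw [hQ]
      simp only [Matrix.conjTranspose_mul, Matrix.conjTranspose_conjTranspose, hEh]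
      simp only [Matrix.mul_assoc]
    have hQ2 : Q * Q = Q := by
      rw [hQ]
      calc (UB * E * UBᴴ) * (UB * E * UBᴴ) = UB * E * (UBᴴ * UB) * (E * UBᴴ) := by
            simp only [Matrix.mul_assoc]
        _ = UB * E * (E * UBᴴ) := by rw [hUB1, Matrix.mul_one]
        _ = UB * (E * E) * UBᴴ := by simp only [Matrix.mul_assoc]
        _ = UB * E * UBᴴ := by rw [hE2]
    have hRh : Rᴴ = R := by
      rw [hRdef]
      simp [Matrix.conjTranspose_sub, hQh]
    have hR2 : R * R = R := by
      rw [hRdef]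
      simp only [Matrix.sub_mul, Matrix.mul_sub, Matrix.one_mul, Matrix.mul_one, hQ2]
      simp [sub_self, sub_zero]
    -- trace of Q
    have htrE : (Matrix.trace E).re = (d : ℝ) := by
      rw [hE, Matrix.trace_diagonal]
      rw [Complex.re_sum]
      have h1 : ∀ j, (ε j).re = (fun j : Fin D =>
          if ((eB.symm j : Fin D) : ℕ) < d then (1 : ℝ) else 0) j := by
        intro j
        by_cases h : ((eB.symm j : Fin D) : ℕ) < d <;> simp [hε, h]
      rw [Finset.sum_congr rfl fun j _ => h1 j]
      rw [← Equiv.sum_comp eB (fun j : Fin D =>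
        if ((eB.symm j : Fin D) : ℕ) < d then (1 : ℝ) else 0)]
      simp only [Equiv.symm_apply_apply]
      rw [Finset.sum_boole]
      rw [card_filter_lt D d hdD]
    have htrQ : (Matrix.trace Q).re = (d : ℝ) := by
      rw [hQ, Matrix.trace_mul_cycle, hUB1, Matrix.one_mul, htrE]
    -- the coefficients c for the A-side
    set c : Fin D → ℝ := fun j => ((UAᴴ * Q * UA) j j).re with hc
    have hWA : (Q * UA)ᴴ * (Q * UA) = UAᴴ * Q * UA := by
      rw [Matrix.conjTranspose_mul, hQh]
      calc UAᴴ * Q * (Q * UA) = UAᴴ * (Q * Q) * UA := by simp only [Matrix.mul_assoc]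
        _ = UAᴴ * Q * UA := by rw [hQ2]
    have hWA' : (R * UA)ᴴ * (R * UA) = UAᴴ * R * UA := by
      rw [Matrix.conjTranspose_mul, hRh]
      calc UAᴴ * R * (R * UA) = UAᴴ * (R * R) * UA := by simp only [Matrix.mul_assoc]
        _ = UAᴴ * R * UA := by rw [hR2]
    have hc0 : ∀ j, 0 ≤ c j := by
      intro j
      rw [hc]
      simp only
      rw [← hWA]
      exact re_diag_nonneg (Q * UA) j
    have hQR : Q + R = 1 := by rw [hRdef]; exact add_sub_cancel Q 1
    have hsumQR : UAᴴ * Q * UA + UAᴴ * R * UA = 1 := by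
      have h1 : UAᴴ * Q * UA + UAᴴ * R * UA = UAᴴ * (Q + R) * UA := by
        simp only [Matrix.mul_add, Matrix.add_mul]
      rw [h1, hQR, Matrix.mul_one, hUA1]
    have hc1 : ∀ j, c j ≤ 1 := by
      intro j
      have h1 : (UAᴴ * Q * UA) j j + (UAᴴ * R * UA) j j = (1 : Matrix (Fin D) (Fin D) ℂ) j j := by
        rw [← Matrix.add_apply, hsumQR]
      have h2 : ((UAᴴ * Q * UA) j j).re + ((UAᴴ * R * UA) j j).re = 1 := by
        have := congrArg Complex.re h1
        rwa [Complex.add_re, Matrix.one_apply_eq] at this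
      have h3 : 0 ≤ ((UAᴴ * R * UA) j j).re := by
        rw [← hWA']
        exact re_diag_nonneg (R * UA) j
      rw [hc]
      simp only
      linarith
    have hcsum : ∑ j, c j = (d : ℝ) := by
      have h1 : ∑ j, c j = (Matrix.trace (UAᴴ * Q * UA)).re := by
        rw [Matrix.trace]
        rw [Complex.re_sum]
        rfl
      rw [h1, Matrix.trace_mul_cycle, ← Matrix.mul_assoc, hUA2, Matrix.one_mul, htrQ]
    -- trace bounds
    have htraceQA : (Matrix.trace (Q * (A * Aᴴ))).re = ∑ j, lA j * c j := by
      rw [hspecA]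
      exact retrace_mul_diag Q UA lA
    have hheadA : (Matrix.trace (Q * (A * Aᴴ))).re
        ≤ ∑ i ∈ Finset.univ.filter (fun i : Fin D => (i : ℕ) < d), σS i ^ 2 := by
      rw [htraceQA]
      rw [← Equiv.sum_comp eS (fun j => lA j * c j)]
      have h1 : ∀ i, lA (eS i) * c (eS i) = σS i ^ 2 * c (eS i) := by
        intro i; rw [hσS_sq i]
      rw [Finset.sum_congr rfl fun i _ => h1 i]
      refine sorted_dot_le hdD (fun i => σS i ^ 2) (fun i => c (eS i)) ?_ ?_ ?_ ?_ ?_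
      · intro i j hij
        exact pow_le_pow_left₀ (hσS0 j) (hσS hij) 2
      · intro i; positivity
      · intro i; exact hc0 _
      · intro i; exact hc1 _
      · rw [Equiv.sum_comp eS c, hcsum]
    -- the B side : UBᴴ Q UB = E
    have hWB : UBᴴ * Q * UB = E := by
      rw [hQ]
      calc UBᴴ * (UB * E * UBᴴ) * UB = (UBᴴ * UB) * (E * (UBᴴ * UB)) := by
            simp only [Matrix.mul_assoc]
        _ = E := by rw [hUB1]; simp
    have htraceQB : (Matrix.trace (Q * (B * Bᴴ))).re
        = ∑ i ∈ Finset.univ.filter (fun i : Fin D => (i : ℕ) < d), σB i ^ 2 := by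
      rw [hspecB, retrace_mul_diag Q UB lB, hWB]
      have h1 : ∀ j, lB j * ((E j j).re) = (fun j : Fin D =>
          if ((eB.symm j : Fin D) : ℕ) < d then lB j else 0) j := by
        intro j
        by_cases h : ((eB.symm j : Fin D) : ℕ) < d <;>
          simp [hE, hε, Matrix.diagonal_apply_eq, h]
      rw [Finset.sum_congr rfl fun j _ => h1 j]
      rw [← Equiv.sum_comp eB (fun j : Fin D =>
        if ((eB.symm j : Fin D) : ℕ) < d then lB j else 0)]
      simp only [Equiv.symm_apply_apply]
      rw [← Finset.sum_filter]
      exact Finset.sum_congr rfl fun i hi => (hσB_sq i).symm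
    -- totals
    have htotB : (Matrix.trace (B * Bᴴ)).re = ∑ i, σB i ^ 2 := by
      rw [hspecB, Matrix.trace_mul_cycle, hUB1, Matrix.one_mul, Matrix.trace_diagonal,
        Complex.re_sum]
      rw [← Equiv.sum_comp eB (fun j => ((lB j : ℂ)).re)]
      refine Finset.sum_congr rfl fun i _ => ?_
      rw [hσB_sq i]
      simp
    have htotA : (Matrix.trace (A * Aᴴ)).re = ∑ i, σS i ^ 2 := by
      rw [hspecA, Matrix.trace_mul_cycle, hUA1, Matrix.one_mul, Matrix.trace_diagonal,
        Complex.re_sum]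
      rw [← Equiv.sum_comp eS (fun j => ((lA j : ℂ)).re)]
      refine Finset.sum_congr rfl fun i _ => ?_
      rw [hσS_sq i]
      simp
    -- filter splitting
    have hfilters : Finset.univ.filter (fun i : Fin D => ¬ (i : ℕ) < d)
        = Finset.univ.filter (fun i : Fin D => d ≤ (i : ℕ)) := by
      apply Finset.filter_congr
      intro i _
      simp [not_lt]
    have hsplitS := Finset.sum_filter_add_sum_filter_not Finset.univ
      (fun i : Fin D => (i : ℕ) < d) (fun i => σS i ^ 2)
    have hsplitB := Finset.sum_filter_add_sum_filter_not Finset.univ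
      (fun i : Fin D => (i : ℕ) < d) (fun i => σB i ^ 2)
    rw [hfilters] at hsplitS hsplitB
    -- the three frobSq facts
    have hRA : frobSq (R * A) = (Matrix.trace (A * Aᴴ)).re - (Matrix.trace (Q * (A * Aᴴ))).re := by
      rw [frobSq_proj_mul R hRh hR2 A, hRdef, Matrix.sub_mul, Matrix.one_mul,
        Matrix.trace_sub, Complex.sub_re]
    have hRB : frobSq (R * B) = (Matrix.trace (B * Bᴴ)).re - (Matrix.trace (Q * (B * Bᴴ))).re := by
      rw [frobSq_proj_mul R hRh hR2 B, hRdef, Matrix.sub_mul, Matrix.one_mul,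
        Matrix.trace_sub, Complex.sub_re]
    have hRΨ : frobSq (R * Ψ) ≤ frobSq Ψ := by
      have e1 : frobSq (R * Ψ) = (Matrix.trace (Ψ * Ψᴴ)).re
          - (Matrix.trace (Q * (Ψ * Ψᴴ))).re := by
        rw [frobSq_proj_mul R hRh hR2 Ψ, hRdef, Matrix.sub_mul, Matrix.one_mul,
          Matrix.trace_sub, Complex.sub_re]
      have e2 : (Matrix.trace (Q * (Ψ * Ψᴴ))).re = frobSq (Q * Ψ) :=
        (frobSq_proj_mul Q hQh hQ2 Ψ).symm
      have e3 := frobSq_nonneg (Q * Ψ)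
      have e4 := retrace Ψ
      linarith
    -- tail bounds
    have htailS : ∑ i ∈ Finset.univ.filter (fun i : Fin D => d ≤ (i : ℕ)), σS i ^ 2
        ≤ frobSq (R * A) := by
      rw [hRA, htotA]
      linarith [hheadA, hsplitS]
    have htailB : frobSq (R * B)
        = ∑ i ∈ Finset.univ.filter (fun i : Fin D => d ≤ (i : ℕ)), σB i ^ 2 := by
      rw [hRB, htotB, htraceQB]
      linarith [hsplitB]
    -- chain everything together
    have hchain : Real.sqrt (∑ i ∈ Finset.univ.filter (fun i : Fin D => d ≤ (i : ℕ)), σS i ^ 2)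
        ≤ Real.sqrt (∑ i ∈ Finset.univ.filter (fun i : Fin D => d ≤ (i : ℕ)), σB i ^ 2)
          + frob Ψ := by
      calc Real.sqrt (∑ i ∈ Finset.univ.filter (fun i : Fin D => d ≤ (i : ℕ)), σS i ^ 2)
          ≤ Real.sqrt (frobSq (R * A)) := Real.sqrt_le_sqrt htailS
        _ = frob (R * A) := (frob_eq _).symm
        _ = frob (R * B + R * Ψ) := by rw [hAdef, Matrix.mul_add]
        _ ≤ frob (R * B) + frob (R * Ψ) := frob_add_le _ _
        _ = Real.sqrt (∑ i ∈ Finset.univ.filter (fun i : Fin D => d ≤ (i : ℕ)), σB i ^ 2)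
            + frob (R * Ψ) := by rw [frob_eq (R * B), htailB]
        _ ≤ Real.sqrt (∑ i ∈ Finset.univ.filter (fun i : Fin D => d ≤ (i : ℕ)), σB i ^ 2)
            + frob Ψ := by
            refine add_le_add_right ?_ _
            rw [frob_eq (R * Ψ), frob_eq Ψ]
            exact Real.sqrt_le_sqrt hRΨ
    have h1 := Real.sqrt_nonneg
      (∑ i ∈ Finset.univ.filter (fun i : Fin D => d ≤ (i : ℕ)), σB i ^ 2)
    have h2 := frob_nonneg Ψ
    nlinarith
  · -- Part 2
    intro Sd hSd Bd hBd
    obtain ⟨hBdrank, _⟩ := hBd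
    obtain ⟨_, hSopt⟩ := hSd
    have h1 : frob (Sd - (B + Ψ)) ≤ frob (Bd - (B + Ψ)) := hSopt Bd hBdrank
    have h2 : Bd - (B + Ψ) = (Bd - B) + (-Ψ) := by abel
    have h3 : frob (Bd - (B + Ψ)) ≤ frob (Bd - B) + frob Ψ := by
      rw [h2]
      calc frob ((Bd - B) + (-Ψ)) ≤ frob (Bd - B) + frob (-Ψ) := frob_add_le _ _
        _ = frob (Bd - B) + frob Ψ := by rw [frob_neg]
    have h4 := frob_nonneg (Bd - B)
    have h5 := frob_nonneg Ψ
    nlinarith
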